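/- Let m ≥ 1 be a positive integer and let α, β, γ, δ > 0 and D ≥ 0 be real numbers, and set Λ = α + βγ. Then ∫₀^D y^{m-1} e^{-αy} [1 − e^{-β(γy+δ)} ∑_{s=0}^{m-1} (β(γy+δ))^s / s!] dy = (m−1)!/α^m − e^{-αD} ∑_{k=0}^{m-1} ((m−1)!/k!) D^k / α^{m-k} − e^{-βδ} ∑_{s=0}^{m-1} (β^s/s!) δ^s ∑_{k₂=0}^{s} binom(s,k₂) (γ/δ)^{k₂} [ (m−1+k₂)!/Λ^{m+k₂} − e^{-ΛD} ∑_{k=0}^{m-1+k₂} ((m−1+k₂)!/k!) D^k / Λ^{m+k₂-k} ]. -/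

import Mathlib

open Finset

lemma exp_poly_integral (n : ℕ) (a : ℝ) (ha : 0 < a) (D : ℝ) :
    ∫ y in (0:ℝ)..D, y ^ n * Real.exp (-a * y)
      = (Nat.factorial n : ℝ) / a ^ (n + 1)
        - Real.exp (-a * D) *
            ∑ k ∈ Finset.range (n + 1),
              ((Nat.factorial n : ℝ) / (Nat.factorial k : ℝ)) * D ^ k / a ^ (n + 1 - k) := by
  have ha' : a ≠ 0 := ha.ne'
  set F : ℝ → ℝ := fun y =>
    -(Real.exp (-a * y) * ∑ k ∈ Finset.range (n + 1),
        ((Nat.factorial n : ℝ) / (Nat.factorial k : ℝ)) * y ^ k / a ^ (n + 1 - k)) with hF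
  have hderiv : ∀ y : ℝ, HasDerivAt F (y ^ n * Real.exp (-a * y)) y := by
    intro y
    have h1 : HasDerivAt (fun y : ℝ => Real.exp (-a * y)) (-a * Real.exp (-a * y)) y := by
      have := ((hasDerivAt_id y).const_mul (-a)).exp
      simpa [mul_comm] using this
    have h2 : HasDerivAt
        (fun y : ℝ => ∑ k ∈ Finset.range (n + 1),
          ((Nat.factorial n : ℝ) / (Nat.factorial k : ℝ)) * y ^ k / a ^ (n + 1 - k))
        (∑ k ∈ Finset.range (n + 1),
          ((Nat.factorial n : ℝ) / (Nat.factorial k : ℝ)) * (k * y ^ (k - 1)) / a ^ (n + 1 - k)) y := by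
      apply HasDerivAt.fun_sum
      intro k _
      exact ((hasDerivAt_pow k y).const_mul _).div_const _
    have h := ((h1.mul h2).neg)
    refine h.congr_deriv ?_
    have key : a * ∑ k ∈ Finset.range (n + 1),
          ((Nat.factorial n : ℝ) / (Nat.factorial k : ℝ)) * y ^ k / a ^ (n + 1 - k)
        - ∑ k ∈ Finset.range (n + 1),
          ((Nat.factorial n : ℝ) / (Nat.factorial k : ℝ)) * (k * y ^ (k - 1)) / a ^ (n + 1 - k)
        = y ^ n := by
      set g : ℕ → ℝ := fun k => (Nat.factorial n : ℝ) / (Nat.factorial k : ℝ) * y ^ k / a ^ (n - k)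
        with hg
      have hA : a * ∑ k ∈ Finset.range (n + 1),
          ((Nat.factorial n : ℝ) / (Nat.factorial k : ℝ)) * y ^ k / a ^ (n + 1 - k)
          = ∑ k ∈ Finset.range (n + 1), g k := by
        rw [Finset.mul_sum]
        apply Finset.sum_congr rfl
        intro k hk
        have hk' : k ≤ n := by simpa using Nat.lt_succ_iff.mp (Finset.mem_range.mp hk)
        have : n + 1 - k = (n - k) + 1 := by omega
        rw [this, pow_succ]
        simp only [hg]
        field_simp
      have hB : ∑ k ∈ Finset.range (n + 1),
          ((Nat.factorial n : ℝ) / (Nat.factorial k : ℝ)) * (k * y ^ (k - 1)) / a ^ (n + 1 - k)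
          = ∑ k ∈ Finset.range n, g k := by
        rw [Finset.sum_range_succ']
        simp only [Nat.cast_zero, zero_mul, mul_zero, zero_div, add_zero]
        apply Finset.sum_congr rfl
        intro i _
        have h1 : n + 1 - (i + 1) = n - i := by omega
        have h2 : (Nat.factorial (i + 1) : ℝ) = (i + 1) * Nat.factorial i := by
          push_cast [Nat.factorial_succ]; ring
        rw [h1, h2, hg]
        simp only [Nat.add_sub_cancel]
        have hfi : (Nat.factorial i : ℝ) ≠ 0 := Nat.cast_ne_zero.mpr (Nat.factorial_ne_zero i)
        field_simp
        push_cast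
        ring
      rw [hA, hB, Finset.sum_range_succ]
      simp [hg, Nat.sub_self]
      field_simp
    have hexp := Real.exp_ne_zero (-a * y)
    rw [← key]
    ring
  rw [intervalIntegral.integral_eq_sub_of_hasDerivAt (fun y _ => hderiv y)
    (((continuous_pow n).mul (Real.continuous_exp.comp (continuous_const.mul continuous_id))).intervalIntegrable 0 D)]
  have hF0 : F 0 = -((Nat.factorial n : ℝ) / a ^ (n + 1)) := by
    rw [hF]
    simp only [mul_zero, Real.exp_zero, one_mul]
    rw [Finset.sum_eq_single 0]
    · simp
    · intro k _ hk
      simp [zero_pow hk]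
    · simp
  rw [hF0, hF]
  ring

/-- Exact evaluation of the inner integral `I₁` of Appendix A (equation (A3)): with `m ≥ 1`,
`α, β, γ, δ > 0`, `D ≥ 0` and `Λ = α + βγ`,
`∫₀ᴰ y^(m-1) e^(-αy) [1 - e^(-β(γy+δ)) ∑_{s<m} (β(γy+δ))^s/s!] dy` equals the stated
closed form. -/
theorem inner_integral_I1_closed_form (m : ℕ) (hm : 1 ≤ m) (α β γ δ D : ℝ)
    (hα : 0 < α) (hβ : 0 < β) (hγ : 0 < γ) (hδ : 0 < δ) (hD : 0 ≤ D)
    (Λ : ℝ) (hΛ : Λ = α + β * γ) :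
    (∫ y in (0:ℝ)..D,
        y ^ (m - 1) * Real.exp (-α * y) *
          (1 - Real.exp (-(β * (γ * y + δ))) *
            ∑ s ∈ Finset.range m, (β * (γ * y + δ)) ^ s / (Nat.factorial s : ℝ)))
      = (Nat.factorial (m - 1) : ℝ) / α ^ m
        - Real.exp (-α * D) *
            ∑ k ∈ Finset.range m,
              ((Nat.factorial (m - 1) : ℝ) / (Nat.factorial k : ℝ)) * D ^ k / α ^ (m - k)
        - Real.exp (-(β * δ)) *
            ∑ s ∈ Finset.range m, (β ^ s / (Nat.factorial s : ℝ)) * δ ^ s *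
              ∑ k₂ ∈ Finset.range (s + 1), (Nat.choose s k₂ : ℝ) * (γ / δ) ^ k₂ *
                ((Nat.factorial (m - 1 + k₂) : ℝ) / Λ ^ (m + k₂)
                  - Real.exp (-Λ * D) *
                      ∑ k ∈ Finset.range (m + k₂),
                        ((Nat.factorial (m - 1 + k₂) : ℝ) / (Nat.factorial k : ℝ)) * D ^ k
                          / Λ ^ (m + k₂ - k)) := by
  have hΛ0 : 0 < Λ := by rw [hΛ]; positivity
  -- pointwise rewriting of the integrand
  have hpt : ∀ y : ℝ,
      y ^ (m - 1) * Real.exp (-α * y) *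
          (1 - Real.exp (-(β * (γ * y + δ))) *
            ∑ s ∈ Finset.range m, (β * (γ * y + δ)) ^ s / (Nat.factorial s : ℝ))
      = y ^ (m - 1) * Real.exp (-α * y)
        - ∑ s ∈ Finset.range m, ∑ k₂ ∈ Finset.range (s + 1),
            (Real.exp (-(β * δ)) * (β ^ s / (Nat.factorial s : ℝ)) * (Nat.choose s k₂ : ℝ)
              * γ ^ k₂ * δ ^ (s - k₂)) * (y ^ (m - 1 + k₂) * Real.exp (-Λ * y)) := by
    intro y
    have hexp : Real.exp (-α * y) * Real.exp (-(β * (γ * y + δ)))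
        = Real.exp (-Λ * y) * Real.exp (-(β * δ)) := by
      rw [← Real.exp_add, ← Real.exp_add]; congr 1; rw [hΛ]; ring
    rw [mul_sub, mul_one]
    congr 1
    have hpow : ∀ s : ℕ, (β * (γ * y + δ)) ^ s
        = β ^ s * ∑ k₂ ∈ Finset.range (s + 1),
            (γ * y) ^ k₂ * δ ^ (s - k₂) * (Nat.choose s k₂ : ℝ) := by
      intro s; rw [mul_pow, add_pow]
    simp only [hpow, Finset.mul_sum, Finset.sum_div]
    refine Finset.sum_congr rfl fun s _ => ?_
    refine Finset.sum_congr rfl fun k₂ _ => ?_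
    rw [pow_add, mul_pow]
    linear_combination (y ^ (m - 1) * (β ^ s * (γ ^ k₂ * y ^ k₂ * δ ^ (s - k₂) *
      (Nat.choose s k₂ : ℝ)) / (Nat.factorial s : ℝ))) * hexp
  rw [intervalIntegral.integral_congr (fun y _ => hpt y)]
  have hcont : ∀ (n : ℕ) (a : ℝ), Continuous (fun y : ℝ => y ^ n * Real.exp (-a * y)) :=
    fun n a => (continuous_pow n).mul (Real.continuous_exp.comp (continuous_const.mul continuous_id))
  have hval : (∫ y in (0:ℝ)..D,
      (y ^ (m - 1) * Real.exp (-α * y)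
        - ∑ s ∈ Finset.range m, ∑ k₂ ∈ Finset.range (s + 1),
            (Real.exp (-(β * δ)) * (β ^ s / (Nat.factorial s : ℝ)) * (Nat.choose s k₂ : ℝ)
              * γ ^ k₂ * δ ^ (s - k₂)) * (y ^ (m - 1 + k₂) * Real.exp (-Λ * y))))
      = (∫ y in (0:ℝ)..D, y ^ (m - 1) * Real.exp (-α * y))
        - ∑ s ∈ Finset.range m, ∑ k₂ ∈ Finset.range (s + 1),
            (Real.exp (-(β * δ)) * (β ^ s / (Nat.factorial s : ℝ)) * (Nat.choose s k₂ : ℝ)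
              * γ ^ k₂ * δ ^ (s - k₂)) * ∫ y in (0:ℝ)..D, y ^ (m - 1 + k₂) * Real.exp (-Λ * y) := by
    rw [intervalIntegral.integral_sub ((hcont (m-1) α).intervalIntegrable 0 D)
      ((continuous_finset_sum _ fun s _ => continuous_finset_sum _ fun k₂ _ =>
        continuous_const.fun_mul (hcont (m - 1 + k₂) Λ)).intervalIntegrable 0 D)]
    congr 1
    rw [intervalIntegral.integral_finset_sum (fun s _ =>
      (continuous_finset_sum _ fun k₂ _ =>
        continuous_const.fun_mul (hcont (m - 1 + k₂) Λ)).intervalIntegrable 0 D)]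
    refine Finset.sum_congr rfl fun s _ => ?_
    rw [intervalIntegral.integral_finset_sum (fun k₂ _ =>
      (continuous_const.fun_mul (hcont (m - 1 + k₂) Λ)).intervalIntegrable 0 D)]
    refine Finset.sum_congr rfl fun k₂ _ => ?_
    rw [intervalIntegral.integral_const_mul]
  rw [hval, exp_poly_integral (m - 1) α hα D, show m - 1 + 1 = m from by omega]
  congr 1
  rw [Finset.mul_sum]
  refine Finset.sum_congr rfl fun s _ => ?_
  rw [Finset.mul_sum, Finset.mul_sum]
  refine Finset.sum_congr rfl fun k₂ hk₂ => ?_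
  have hk₂s : k₂ ≤ s := Nat.lt_succ_iff.mp (Finset.mem_range.mp hk₂)
  rw [exp_poly_integral (m - 1 + k₂) Λ hΛ0 D, show m - 1 + k₂ + 1 = m + k₂ from by omega]
  set B : ℝ := (Nat.factorial (m - 1 + k₂) : ℝ) / Λ ^ (m + k₂)
    - Real.exp (-Λ * D) * ∑ k ∈ Finset.range (m + k₂),
        ((Nat.factorial (m - 1 + k₂) : ℝ) / (Nat.factorial k : ℝ)) * D ^ k / Λ ^ (m + k₂ - k)
    with hB
  clear_value B
  have hδs : δ ^ s = δ ^ k₂ * δ ^ (s - k₂) := by rw [← pow_add]; congr 1; omega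
  rw [div_pow, hδs]
  have hδk : (δ : ℝ) ^ k₂ ≠ 0 := pow_ne_zero _ hδ.ne'
  have hfs : (Nat.factorial s : ℝ) ≠ 0 := Nat.cast_ne_zero.mpr (Nat.factorial_ne_zero s)
  field_simp
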